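/- Let λ ⊢ n, μ ⊢ n-1 with λ → μ, let 2 ≤ l ≤ n, and let θ ∈ S_l. Then Σ_{γ,σ∈S_l : γσ=θ} sign(γ) Ñ^{λ,μ}_{S_l}(γ,σ) = Σ_{γ,σ∈S_l : γσ=θ} sign(γ) N̂^{λ,μ}(γ,σ); that is, in the signed sum over factorizations of θ, the count of injective maps may be replaced by the count of all maps. -/

import Mathlib

open scoped Classical

section AuxSigned

variable {β M : Type*}

lemma aux_pow_invariant' (w : Equiv.Perm β) (F : β → M) (h : ∀ x, F (w x) = F x) :
    ∀ (k : ℤ) (x : β), F ((w ^ k) x) = F x := by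
  have hnat : ∀ (m : ℕ) (x : β), F ((w ^ m) x) = F x := by
    intro m
    induction m with
    | zero => intro x; simp
    | succ m ih =>
        intro x
        rw [pow_succ, Equiv.Perm.mul_apply, ih (w x), h x]
  intro k x
  cases k with
  | ofNat m => simpa using hnat m x
  | negSucc m =>
      have h2 : F ((w ^ (m + 1)) ((w ^ (m + 1))⁻¹ x)) = F ((w ^ (m + 1))⁻¹ x) :=
        hnat (m + 1) _
      simp only [Equiv.Perm.coe_inv, Equiv.apply_symm_apply] at h2
      rw [zpow_negSucc]
      exact h2.symm

lemma sameCycle_inv' (w : Equiv.Perm β) (F : β → M) (h : ∀ x, F (w x) = F x)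
    {x y : β} (hxy : w.SameCycle x y) : F x = F y := by
  obtain ⟨k, hk⟩ := hxy
  rw [← hk]
  exact (aux_pow_invariant' w F h k x).symm

lemma fixed_sameCycle' (w : Equiv.Perm β) {x y : β} (hy : w y = y)
    (hxy : w.SameCycle x y) : x = y := by
  obtain ⟨k, hk⟩ := hxy.symm
  rw [← hk, Equiv.Perm.zpow_apply_eq_self_of_apply_eq_self hy]

lemma F_swap' [DecidableEq β] (F : β → M) {a b : β} (hab : F a = F b) (x : β) :
    F (Equiv.swap a b x) = F x := by
  rcases eq_or_ne x a with rfl | hxa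
  · rw [Equiv.swap_apply_left]; exact hab.symm
  rcases eq_or_ne x b with rfl | hxb
  · rw [Equiv.swap_apply_right]; exact hab
  · rw [Equiv.swap_apply_of_ne_of_ne hxa hxb]

lemma constancy_mul_swap_right' [DecidableEq β] (u : Equiv.Perm β) {a b : β} (F : β → M)
    (hab : F a = F b) (hu : ∀ x y, u.SameCycle x y → F x = F y) :
    ∀ x y, (u * Equiv.swap a b).SameCycle x y → F x = F y := by
  intro x y h
  refine sameCycle_inv' _ F (fun z => ?_) h
  rw [Equiv.Perm.mul_apply]
  calc F (u (Equiv.swap a b z)) = F (Equiv.swap a b z) := (hu _ _ ⟨1, by simp⟩).symm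
    _ = F z := F_swap' F hab z

lemma constancy_mul_swap_left' [DecidableEq β] (u : Equiv.Perm β) {a b : β} (F : β → M)
    (hab : F a = F b) (hu : ∀ x y, u.SameCycle x y → F x = F y) :
    ∀ x y, (Equiv.swap a b * u).SameCycle x y → F x = F y := by
  intro x y h
  refine sameCycle_inv' _ F (fun z => ?_) h
  rw [Equiv.Perm.mul_apply, F_swap' F hab]
  exact (hu _ _ ⟨1, by simp⟩).symm

end AuxSigned

noncomputable def Fext' {l n : ℕ} (G : Fin l → ℕ) : Fin n → ℕ :=
  fun x => if h : (x : ℕ) < l then G ⟨x, h⟩ else 0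

lemma Fext_castLE' {l n : ℕ} (hln : l ≤ n) (G : Fin l → ℕ) (a : Fin l) :
    Fext' G (Fin.castLE hln a) = G a := by
  have h : ((Fin.castLE hln a : Fin n) : ℕ) < l := a.2
  simp only [Fext', dif_pos h]
  congr 1

lemma partial_total' {l n : ℕ} (hln : l ≤ n) (γ : Equiv.Perm (Fin n))
    (hsupp : ∀ i : Fin n, l ≤ (i : ℕ) → γ i = i) (G : Fin l → ℕ) :
    (∀ a b : Fin l, γ.SameCycle (Fin.castLE hln a) (Fin.castLE hln b) → G a = G b) ↔
    (∀ x y : Fin n, γ.SameCycle x y → Fext' G x = Fext' G y) := by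
  constructor
  · intro hp x y hxy
    by_cases hy : (y : ℕ) < l
    · by_cases hx : (x : ℕ) < l
      · have hx' : x = Fin.castLE hln ⟨(x : ℕ), hx⟩ := Fin.ext rfl
        have hy' : y = Fin.castLE hln ⟨(y : ℕ), hy⟩ := Fin.ext rfl
        rw [hx', hy', Fext_castLE', Fext_castLE']
        apply hp
        rw [← hx', ← hy']; exact hxy
      · have : y = x := fixed_sameCycle' γ (hsupp x (le_of_not_gt hx)) hxy.symm
        rw [this]
    · have : x = y := fixed_sameCycle' γ (hsupp y (le_of_not_gt hy)) hxy
      rw [this]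
  · intro ht a b hab
    have := ht _ _ hab
    rwa [Fext_castLE', Fext_castLE'] at this

lemma natCard_subtype_eq_sum' {α : Type*} [Fintype α] (p : α → Prop) [DecidablePred p] :
    ((Nat.card {x // p x} : ℕ) : ℤ) = ∑ x : α, if p x then (1 : ℤ) else 0 := by
  rw [Nat.card_eq_fintype_card, Fintype.card_subtype, Finset.card_filter]
  push_cast
  apply Finset.sum_congr rfl
  intro x _
  split_ifs <;> simp

lemma sum_comm3' {A B C M : Type*} [Fintype A] [Fintype B] [Fintype C] [AddCommMonoid M]
    (t : A → B → C → M) :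
    (∑ a : A, ∑ b : B, ∑ c : C, t a b c) = ∑ c : C, ∑ a : A, ∑ b : B, t a b c :=
  (Finset.sum_congr rfl fun _ _ => Finset.sum_comm).trans Finset.sum_comm


/-- `Ñ^{λ,μ}_{S_l}(γ,σ)`: the number of one-to-one maps `f : {1,…,l} → λ` (here `f : Fin l →
lam.cells`) with `f(1) = λ∖μ` (the removed box), such that the column coordinate `c ∘ f` is
constant on each cycle of `γ` and the row coordinate `r ∘ f` is constant on each cycle of `σ`
(cycles of `γ, σ ∈ S_l` regarded as permutations of `{1,…,l}`, embedded in `Fin n` via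
`Fin.castLE`). -/
noncomputable def NtildeSl {n : ℕ} (lam : YoungDiagram) (box : lam.cells)
    (l : ℕ) (hl : l ≤ n) (γ σ : Equiv.Perm (Fin n)) : ℕ :=
  Nat.card {f : Fin l → lam.cells //
    Function.Injective f ∧
    (∀ a : Fin l, (a : ℕ) = 0 → f a = box) ∧
    (∀ a b : Fin l, γ.SameCycle (Fin.castLE hl a) (Fin.castLE hl b) →
      ((f a) : ℕ × ℕ).2 = ((f b) : ℕ × ℕ).2) ∧
    (∀ a b : Fin l, σ.SameCycle (Fin.castLE hl a) (Fin.castLE hl b) →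
      ((f a) : ℕ × ℕ).1 = ((f b) : ℕ × ℕ).1)}

/-- `N̂^{λ,μ}(γ,σ)`: the number of all (not necessarily injective) maps `f : {1,…,l} → λ` with
`f(1) = λ∖μ`, such that `c ∘ f` is constant on each cycle of `γ` and `r ∘ f` is constant on each
cycle of `σ`. -/
noncomputable def Nhat {n : ℕ} (lam : YoungDiagram) (box : lam.cells)
    (l : ℕ) (hl : l ≤ n) (γ σ : Equiv.Perm (Fin n)) : ℕ :=
  Nat.card {f : Fin l → lam.cells //
    (∀ a : Fin l, (a : ℕ) = 0 → f a = box) ∧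
    (∀ a b : Fin l, γ.SameCycle (Fin.castLE hl a) (Fin.castLE hl b) →
      ((f a) : ℕ × ℕ).2 = ((f b) : ℕ × ℕ).2) ∧
    (∀ a b : Fin l, σ.SameCycle (Fin.castLE hl a) (Fin.castLE hl b) →
      ((f a) : ℕ × ℕ).1 = ((f b) : ℕ × ℕ).1)}

/-- Let `λ ⊢ n`, `μ ⊢ n-1` with `λ → μ`, `2 ≤ l ≤ n`, `θ ∈ S_l`.  Then
`∑_{γ,σ ∈ S_l, γσ=θ} sign(γ) Ñ^{λ,μ}_{S_l}(γ,σ) = ∑_{γ,σ ∈ S_l, γσ=θ} sign(γ) N̂^{λ,μ}(γ,σ)`: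
in the signed sum over factorizations of `θ`, the count of injective maps may be replaced by the
count of all maps. -/
theorem signed_sum_injective_eq_signed_sum_all
    {n : ℕ} (hn : 2 ≤ n) (lam mu : YoungDiagram)
    (hlam : lam.card = n) (hmu : mu.card = n - 1) (hsub : mu ≤ lam)
    (box : lam.cells) (hbox : (box : ℕ × ℕ) ∉ mu)
    (l : ℕ) (hl2 : 2 ≤ l) (hln : l ≤ n)
    (θ : Equiv.Perm (Fin n)) (hθ : ∀ i : Fin n, l ≤ (i : ℕ) → θ i = i) :
    (∑ γ : Equiv.Perm (Fin n), ∑ σ : Equiv.Perm (Fin n),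
      if (∀ i : Fin n, l ≤ (i : ℕ) → γ i = i) ∧ (∀ i : Fin n, l ≤ (i : ℕ) → σ i = i) ∧
          γ * σ = θ then
        (Equiv.Perm.sign γ : ℤ) * (NtildeSl lam box l hln γ σ : ℤ)
      else 0) =
    (∑ γ : Equiv.Perm (Fin n), ∑ σ : Equiv.Perm (Fin n),
      if (∀ i : Fin n, l ≤ (i : ℕ) → γ i = i) ∧ (∀ i : Fin n, l ≤ (i : ℕ) → σ i = i) ∧
          γ * σ = θ then
        (Equiv.Perm.sign γ : ℤ) * (Nhat lam box l hln γ σ : ℤ)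
      else 0) := by
    classical
  -- predicates
  let Q0 : (Fin l → lam.cells) → Prop := fun f => ∀ a : Fin l, (a : ℕ) = 0 → f a = box
  let Col : Equiv.Perm (Fin n) → (Fin l → lam.cells) → Prop := fun γ f =>
    ∀ a b : Fin l, γ.SameCycle (Fin.castLE hln a) (Fin.castLE hln b) →
      ((f a) : ℕ × ℕ).2 = ((f b) : ℕ × ℕ).2
  let Row : Equiv.Perm (Fin n) → (Fin l → lam.cells) → Prop := fun σ f =>
    ∀ a b : Fin l, σ.SameCycle (Fin.castLE hln a) (Fin.castLE hln b) →
      ((f a) : ℕ × ℕ).1 = ((f b) : ℕ × ℕ).1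
  let Cond : Equiv.Perm (Fin n) → Equiv.Perm (Fin n) → Prop := fun γ σ =>
    (∀ i : Fin n, l ≤ (i : ℕ) → γ i = i) ∧ (∀ i : Fin n, l ≤ (i : ℕ) → σ i = i) ∧ γ * σ = θ
  have hN1 : ∀ γ σ : Equiv.Perm (Fin n), ((NtildeSl lam box l hln γ σ : ℕ) : ℤ) =
      ∑ f : Fin l → lam.cells,
        if (Function.Injective f ∧ Q0 f ∧ Col γ f ∧ Row σ f) then (1 : ℤ) else 0 := by
    intro γ σ
    unfold NtildeSl
    exact natCard_subtype_eq_sum' _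
  have hN2 : ∀ γ σ : Equiv.Perm (Fin n), ((Nhat lam box l hln γ σ : ℕ) : ℤ) =
      ∑ f : Fin l → lam.cells,
        if (Q0 f ∧ Col γ f ∧ Row σ f) then (1 : ℤ) else 0 := by
    intro γ σ
    unfold Nhat
    exact natCard_subtype_eq_sum' _
  have step1 : ∀ (γ σ : Equiv.Perm (Fin n)),
      (if Cond γ σ then (Equiv.Perm.sign γ : ℤ) * (NtildeSl lam box l hln γ σ : ℤ) else 0) =
      ∑ f : Fin l → lam.cells,
        if Cond γ σ ∧ Function.Injective f ∧ Q0 f ∧ Col γ f ∧ Row σ f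
        then (Equiv.Perm.sign γ : ℤ) else 0 := by
    intro γ σ
    by_cases hC : Cond γ σ
    · rw [if_pos hC, hN1, Finset.mul_sum]
      apply Finset.sum_congr rfl
      intro f _
      by_cases hq : Function.Injective f ∧ Q0 f ∧ Col γ f ∧ Row σ f
      · rw [if_pos hq, if_pos ⟨hC, hq⟩, mul_one]
      · rw [if_neg hq, if_neg (fun h => hq h.2), mul_zero]
    · rw [if_neg hC]
      symm
      apply Finset.sum_eq_zero
      intro f _
      exact if_neg (fun h => hC h.1)
  have step2 : ∀ (γ σ : Equiv.Perm (Fin n)),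
      (if Cond γ σ then (Equiv.Perm.sign γ : ℤ) * (Nhat lam box l hln γ σ : ℤ) else 0) =
      ∑ f : Fin l → lam.cells,
        if Cond γ σ ∧ Q0 f ∧ Col γ f ∧ Row σ f
        then (Equiv.Perm.sign γ : ℤ) else 0 := by
    intro γ σ
    by_cases hC : Cond γ σ
    · rw [if_pos hC, hN2, Finset.mul_sum]
      apply Finset.sum_congr rfl
      intro f _
      by_cases hq : Q0 f ∧ Col γ f ∧ Row σ f
      · rw [if_pos hq, if_pos ⟨hC, hq⟩, mul_one]
      · rw [if_neg hq, if_neg (fun h => hq h.2), mul_zero]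
    · rw [if_neg hC]
      symm
      apply Finset.sum_eq_zero
      intro f _
      exact if_neg (fun h => hC h.1)
  show
    (∑ γ : Equiv.Perm (Fin n), ∑ σ : Equiv.Perm (Fin n),
      if Cond γ σ then (Equiv.Perm.sign γ : ℤ) * (NtildeSl lam box l hln γ σ : ℤ) else 0) =
    (∑ γ : Equiv.Perm (Fin n), ∑ σ : Equiv.Perm (Fin n),
      if Cond γ σ then (Equiv.Perm.sign γ : ℤ) * (Nhat lam box l hln γ σ : ℤ) else 0)
  calc
    (∑ γ : Equiv.Perm (Fin n), ∑ σ : Equiv.Perm (Fin n),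
        if Cond γ σ then (Equiv.Perm.sign γ : ℤ) * (NtildeSl lam box l hln γ σ : ℤ) else 0)
      = ∑ f : Fin l → lam.cells, ∑ γ : Equiv.Perm (Fin n), ∑ σ : Equiv.Perm (Fin n),
          if Cond γ σ ∧ Function.Injective f ∧ Q0 f ∧ Col γ f ∧ Row σ f
          then (Equiv.Perm.sign γ : ℤ) else 0 := by
        rw [show (∑ γ : Equiv.Perm (Fin n), ∑ σ : Equiv.Perm (Fin n),
            if Cond γ σ then (Equiv.Perm.sign γ : ℤ) * (NtildeSl lam box l hln γ σ : ℤ) else 0)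
          = ∑ γ : Equiv.Perm (Fin n), ∑ σ : Equiv.Perm (Fin n), ∑ f : Fin l → lam.cells,
            if Cond γ σ ∧ Function.Injective f ∧ Q0 f ∧ Col γ f ∧ Row σ f
            then (Equiv.Perm.sign γ : ℤ) else 0 from
          Finset.sum_congr rfl fun γ _ => Finset.sum_congr rfl fun σ _ => step1 γ σ]
        exact sum_comm3' _
    _ = ∑ f : Fin l → lam.cells, ∑ γ : Equiv.Perm (Fin n), ∑ σ : Equiv.Perm (Fin n),
          if Cond γ σ ∧ Q0 f ∧ Col γ f ∧ Row σ f
          then (Equiv.Perm.sign γ : ℤ) else 0 := by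
        apply Finset.sum_congr rfl
        intro f _
        by_cases hf : Function.Injective f
        · apply Finset.sum_congr rfl
          intro γ _
          apply Finset.sum_congr rfl
          intro σ _
          simp only [hf, true_and]
        · -- key cancellation
          have hL : (∑ γ : Equiv.Perm (Fin n), ∑ σ : Equiv.Perm (Fin n),
              if Cond γ σ ∧ Function.Injective f ∧ Q0 f ∧ Col γ f ∧ Row σ f
              then (Equiv.Perm.sign γ : ℤ) else 0) = 0 := by
            apply Finset.sum_eq_zero
            intro γ _
            apply Finset.sum_eq_zero
            intro σ _
            exact if_neg (fun h => hf h.2.1)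
          rw [hL]
          symm
          obtain ⟨a, b, hfab, hab⟩ := Function.not_injective_iff.mp hf
          set A : Fin n := Fin.castLE hln a with hA
          set B : Fin n := Fin.castLE hln b with hB
          have hABne : A ≠ B := fun h => hab (Fin.castLE_injective hln h)
          set τ : Equiv.Perm (Fin n) := Equiv.swap A B with hτ
          have hτsq : τ * τ = 1 := Equiv.swap_mul_self A B
          -- τ fixes everything ≥ l
          have hτfix : ∀ i : Fin n, l ≤ (i : ℕ) → τ i = i := by
            intro i hi
            have hiA : i ≠ A := by
              intro h
              rw [h] at hi
              exact absurd hi (not_le.mpr a.2)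
            have hiB : i ≠ B := by
              intro h
              rw [h] at hi
              exact absurd hi (not_le.mpr b.2)
            exact Equiv.swap_apply_of_ne_of_ne hiA hiB
          -- forward transfer
          have key : ∀ γ σ : Equiv.Perm (Fin n), (Cond γ σ ∧ Q0 f ∧ Col γ f ∧ Row σ f) →
              (Cond (γ * τ) (τ * σ) ∧ Q0 f ∧ Col (γ * τ) f ∧ Row (τ * σ) f) := by
            rintro γ σ ⟨⟨hγs, hσs, hprod⟩, hq0, hcol, hrow⟩
            have hγτs : ∀ i : Fin n, l ≤ (i : ℕ) → (γ * τ) i = i := by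
              intro i hi
              rw [Equiv.Perm.mul_apply, hτfix i hi, hγs i hi]
            have hτσs : ∀ i : Fin n, l ≤ (i : ℕ) → (τ * σ) i = i := by
              intro i hi
              rw [Equiv.Perm.mul_apply, hσs i hi, hτfix i hi]
            refine ⟨⟨hγτs, hτσs, ?_⟩, hq0, ?_, ?_⟩
            · rw [mul_assoc, ← mul_assoc τ τ σ, hτsq, one_mul]
              exact hprod
            · -- column condition for γ * τ
              set G : Fin l → ℕ := fun c => ((f c : ℕ × ℕ)).2 with hG
              have h1 : ∀ x y : Fin n, γ.SameCycle x y → Fext' G x = Fext' G y :=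
                (partial_total' hln γ hγs G).mp hcol
              have hFAB : (Fext' G : Fin n → ℕ) A = Fext' G B := by
                rw [hA, hB, Fext_castLE', Fext_castLE']
                show ((f a : ℕ × ℕ)).2 = ((f b : ℕ × ℕ)).2
                rw [hfab]
              have h2 := constancy_mul_swap_right' γ (Fext' G) hFAB h1
              exact (partial_total' hln (γ * τ) hγτs G).mpr h2
            · -- row condition for τ * σ
              set G : Fin l → ℕ := fun c => ((f c : ℕ × ℕ)).1 with hG
              have h1 : ∀ x y : Fin n, σ.SameCycle x y → Fext' G x = Fext' G y :=
                (partial_total' hln σ hσs G).mp hrow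
              have hFAB : (Fext' G : Fin n → ℕ) A = Fext' G B := by
                rw [hA, hB, Fext_castLE', Fext_castLE']
                show ((f a : ℕ × ℕ)).1 = ((f b : ℕ × ℕ)).1
                rw [hfab]
              have h2 := constancy_mul_swap_left' σ (Fext' G) hFAB h1
              exact (partial_total' hln (τ * σ) hτσs G).mpr h2
          have cancel1 : ∀ γ : Equiv.Perm (Fin n), γ * τ * τ = γ := by
            intro γ
            rw [mul_assoc, hτsq, mul_one]
          have cancel2 : ∀ σ : Equiv.Perm (Fin n), τ * (τ * σ) = σ := by
            intro σ
            rw [← mul_assoc, hτsq, one_mul]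
          have key_iff : ∀ γ σ : Equiv.Perm (Fin n), (Cond γ σ ∧ Q0 f ∧ Col γ f ∧ Row σ f) ↔
              (Cond (γ * τ) (τ * σ) ∧ Q0 f ∧ Col (γ * τ) f ∧ Row (τ * σ) f) := by
            intro γ σ
            constructor
            · exact key γ σ
            · intro h
              have := key (γ * τ) (τ * σ) h
              rwa [cancel1, cancel2] at this
          have hprodsum : (∑ γ : Equiv.Perm (Fin n), ∑ σ : Equiv.Perm (Fin n),
              if Cond γ σ ∧ Q0 f ∧ Col γ f ∧ Row σ f
              then (Equiv.Perm.sign γ : ℤ) else 0) =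
              ∑ p ∈ Finset.univ ×ˢ (Finset.univ : Finset (Equiv.Perm (Fin n))),
                (if Cond p.1 p.2 ∧ Q0 f ∧ Col p.1 f ∧ Row p.2 f
                 then (Equiv.Perm.sign p.1 : ℤ) else 0) :=
            (Finset.sum_product' _ _ _).symm
          rw [hprodsum]
          apply Finset.sum_ninvolution
            (g := fun p : Equiv.Perm (Fin n) × Equiv.Perm (Fin n) => (p.1 * τ, τ * p.2))
          · intro p
            by_cases hC : Cond p.1 p.2 ∧ Q0 f ∧ Col p.1 f ∧ Row p.2 f
            · rw [if_pos hC, if_pos ((key_iff p.1 p.2).mp hC)]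
              show (Equiv.Perm.sign p.1 : ℤ) + (Equiv.Perm.sign (p.1 * τ) : ℤ) = 0
              rw [Equiv.Perm.sign_mul, Equiv.Perm.sign_swap hABne]
              simp
            · rw [if_neg hC, if_neg (fun h => hC ((key_iff p.1 p.2).mpr h))]
              simp
          · intro p _ h
            have h1 : p.1 * τ = p.1 := congrArg Prod.fst h
            have hτ1 : τ = 1 :=
              mul_left_cancel (show p.1 * τ = p.1 * 1 by rw [mul_one]; exact h1)
            have hABeq : A = B := by
              have h2 := Equiv.swap_apply_left A B
              rw [← hτ, hτ1] at h2
              simpa using h2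
            exact hABne hABeq
          · intro p
            simp
          · intro p
            show ((p.1 * τ * τ, τ * (τ * p.2)) : Equiv.Perm (Fin n) × Equiv.Perm (Fin n)) = p
            rw [cancel1, cancel2]
    _ = ∑ γ : Equiv.Perm (Fin n), ∑ σ : Equiv.Perm (Fin n),
          if Cond γ σ then (Equiv.Perm.sign γ : ℤ) * (Nhat lam box l hln γ σ : ℤ) else 0 := by
        rw [show (∑ γ : Equiv.Perm (Fin n), ∑ σ : Equiv.Perm (Fin n),
            if Cond γ σ then (Equiv.Perm.sign γ : ℤ) * (Nhat lam box l hln γ σ : ℤ) else 0)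
          = ∑ γ : Equiv.Perm (Fin n), ∑ σ : Equiv.Perm (Fin n), ∑ f : Fin l → lam.cells,
            if Cond γ σ ∧ Q0 f ∧ Col γ f ∧ Row σ f
            then (Equiv.Perm.sign γ : ℤ) else 0 from
          Finset.sum_congr rfl fun γ _ => Finset.sum_congr rfl fun σ _ => step2 γ σ]
        exact (sum_comm3' _).symm
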